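/- Let c : X₁ × ⋯ × X_d → [0,∞) be continuous, G a c-splitting set, and x⁰ = (x₁⁰,…,x_d⁰) ∈ G. Then there exists a measurable (G,c)-splitting tuple (φ₁,…,φ_d) satisfying the pointwise bounds φᵢ(xᵢ) ≤ c(x₁⁰,…,x_{i−1}⁰, xᵢ, x_{i+1}⁰,…,x_d⁰) for all xᵢ ∈ Xᵢ and each i = 1,…,d. -/

import Mathlib

open scoped BigOperators

noncomputable section

open Filter Set Topology

private lemma ereal_sum_ne_top {ι : Type*} (s : Finset ι) (f : ι → EReal)
    (h : ∀ i ∈ s, f i ≠ ⊤) : ∑ i ∈ s, f i ≠ ⊤ := by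
  classical
  induction s using Finset.induction_on with
  | empty => simp
  | @insert j s hj ih =>
    rw [Finset.sum_insert hj]
    exact (EReal.add_lt_top (h j (Finset.mem_insert_self j s))
      (ih fun i hi => h i (Finset.mem_insert_of_mem hi))).ne

private lemma measurable_limsup_nhds {α : Type*} [TopologicalSpace α] [MeasurableSpace α]
    [OpensMeasurableSpace α] (f : α → EReal) :
    Measurable fun x => limsup f (𝓝 x) := by
  apply measurable_of_Iio
  intro r
  have hopen : IsOpen {x | limsup f (𝓝 x) < r} := by
    rw [isOpen_iff_mem_nhds]
    intro x hx
    obtain ⟨m, hm1, hm2⟩ := exists_between (show limsup f (𝓝 x) < r from hx)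
    have h1 : ∀ᶠ y in 𝓝 x, f y < m := eventually_lt_of_limsup_lt hm1
    filter_upwards [h1.eventually_nhds] with y hy
    exact lt_of_le_of_lt
      (limsup_le_of_le (by isBoundedDefault) (hy.mono fun z hz => hz.le)) hm2
  exact hopen.measurableSet

/-- `(G, c)`-splitting tuple. -/
def IsSplittingTuple {d : ℕ} {X : Fin d → Type*} (c : (∀ i, X i) → ℝ)
    (G : Set (∀ i, X i)) (φ : ∀ i, X i → EReal) : Prop :=
  (∀ i x, φ i x < ⊤) ∧
  (∀ x : ∀ i, X i, ∑ i, φ i (x i) ≤ (c x : EReal)) ∧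
  (∀ x ∈ G, ∑ i, φ i (x i) = (c x : EReal))

/-- Let `c ≥ 0` be continuous, `G` a `c`-splitting set and `x⁰ ∈ G`. Then there is a
measurable `(G, c)`-splitting tuple with `φᵢ(xᵢ) ≤ c(x₁⁰, …, xᵢ, …, x_d⁰)` for all `xᵢ`. -/
theorem exists_bounded_measurable_splittingTuple {d : ℕ} {X : Fin d → Type*}
    [∀ i, TopologicalSpace (X i)] [∀ i, PolishSpace (X i)]
    [∀ i, MeasurableSpace (X i)] [∀ i, BorelSpace (X i)]
    (c : (∀ i, X i) → ℝ) (hc : Continuous c) (hc0 : ∀ x, 0 ≤ c x)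
    (G : Set (∀ i, X i)) (hsplit : ∃ φ, IsSplittingTuple c G φ)
    (x0 : ∀ i, X i) (hx0 : x0 ∈ G) :
    ∃ φ : ∀ i, X i → EReal, IsSplittingTuple c G φ ∧
      (∀ i, Measurable (φ i)) ∧
      ∀ i (xi : X i), φ i xi ≤ ((c (Function.update x0 i xi) : ℝ) : EReal) := by
  classical
  obtain ⟨ψ, hψtop, hψle, hψeq⟩ := hsplit
  have hψG := hψeq x0 hx0
  have hcoe : ∀ (s : Finset (Fin d)) (g : Fin d → ℝ),
      ((∑ i ∈ s, g i : ℝ) : EReal) = ∑ i ∈ s, ((g i : ℝ) : EReal) := by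
    intro s g
    exact map_sum (⟨⟨Real.toEReal, EReal.coe_zero⟩,
      fun x y => EReal.coe_add x y⟩ : ℝ →+ EReal) g s
  -- the values ψᵢ(x0 i) are finite
  have hbot : ∀ i, ψ i (x0 i) ≠ ⊥ := by
    intro j hj
    have h2 : ((c x0 : ℝ) : EReal) = ⊥ := by
      rw [← hψG, ← Finset.add_sum_erase _ _ (Finset.mem_univ j), hj, EReal.bot_add]
    exact EReal.coe_ne_bot _ h2
  set a : Fin d → ℝ := fun i => (ψ i (x0 i)).toReal with ha_def
  have ha : ∀ i, ψ i (x0 i) = ((a i : ℝ) : EReal) := fun i =>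
    (EReal.coe_toReal (hψtop i (x0 i)).ne (hbot i)).symm
  set T : ℝ := c x0 with hT_def
  have hTnn : 0 ≤ T := hc0 x0
  have hsum_a : ∑ i, a i = T := by
    have h2 : ((∑ i, a i : ℝ) : EReal) = ((T : ℝ) : EReal) := by
      rw [hcoe]
      simp_rw [← ha]
      exact hψG
    exact_mod_cast h2
  set b : Fin d → ℝ := fun i => T / d - a i with hb_def
  have hsum_b : ∑ i, b i = 0 := by
    rcases Nat.eq_zero_or_pos d with hd | hd
    · subst hd; simp
    · have hd' : (d : ℝ) ≠ 0 := Nat.cast_ne_zero.2 hd.ne'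
      simp only [hb_def, Finset.sum_sub_distrib, Finset.sum_const, Finset.card_univ,
        Fintype.card_fin, nsmul_eq_mul, hsum_a]
      field_simp
      ring
  set χ : ∀ i, X i → EReal := fun i xi => ψ i xi + ((b i : ℝ) : EReal) with hχ_def
  have hχtop : ∀ i xi, χ i xi ≠ ⊤ := fun i xi =>
    (EReal.add_lt_top (hψtop i xi).ne (EReal.coe_ne_top _)).ne
  have hχsum : ∀ x : ∀ i, X i, ∑ i, χ i (x i) = ∑ i, ψ i (x i) := by
    intro x
    simp only [hχ_def]
    rw [Finset.sum_add_distrib, ← hcoe, hsum_b]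
    simp
  have hχle : ∀ x, ∑ i, χ i (x i) ≤ (c x : EReal) := fun x => (hχsum x) ▸ hψle x
  have hχeq : ∀ x ∈ G, ∑ i, χ i (x i) = (c x : EReal) := fun x hx =>
    (hχsum x).trans (hψeq x hx)
  -- pointwise bound for χ
  have hχbd : ∀ i xi, χ i xi ≤ ((c (Function.update x0 i xi) : ℝ) : EReal) := by
    intro i xi
    have h1 := hψle (Function.update x0 i xi)
    have h2 : ∑ j, ψ j (Function.update x0 i xi j)
        = ψ i xi + ((∑ j ∈ Finset.univ.erase i, a j : ℝ) : EReal) := by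
      rw [← Finset.add_sum_erase _ _ (Finset.mem_univ i), Function.update_self]
      congr 1
      rw [hcoe]
      exact Finset.sum_congr rfl fun j hj => by
        rw [Function.update_of_ne (Finset.ne_of_mem_erase hj), ha]
    rw [h2] at h1
    have hb_le : b i ≤ ∑ j ∈ Finset.univ.erase i, a j := by
      have he : ∑ j ∈ Finset.univ.erase i, a j = T - a i := by
        rw [Finset.sum_erase_eq_sub (Finset.mem_univ i), hsum_a]
      rw [he, hb_def]
      have hd1 : (1 : ℝ) ≤ d := by exact_mod_cast i.pos
      have hdiv : T / d ≤ T := div_le_self hTnn hd1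
      simp only
      linarith
    calc χ i xi = ψ i xi + ((b i : ℝ) : EReal) := rfl
      _ ≤ ψ i xi + ((∑ j ∈ Finset.univ.erase i, a j : ℝ) : EReal) :=
          add_le_add_right (EReal.coe_le_coe_iff.2 hb_le) _
      _ ≤ _ := h1
  -- upper semicontinuous envelope
  set φ : ∀ i, X i → EReal := fun i xi => limsup (χ i) (𝓝 xi) with hφ_def
  have hupd_cont : ∀ (i : Fin d), Continuous fun xi : X i =>
      ((c (Function.update x0 i xi) : ℝ) : EReal) := fun i =>
    continuous_coe_real_ereal.comp (hc.comp (continuous_const.update i continuous_id))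
  have hφ_bd : ∀ i xi, φ i xi ≤ ((c (Function.update x0 i xi) : ℝ) : EReal) := by
    intro i xi
    have h1 : limsup (χ i) (𝓝 xi)
        ≤ limsup (fun y => ((c (Function.update x0 i y) : ℝ) : EReal)) (𝓝 xi) :=
      limsup_le_limsup (Eventually.of_forall fun y => hχbd i y)
    have h2 := ((hupd_cont i).tendsto xi).limsup_eq
    exact h1.trans h2.le
  have hφtop : ∀ i xi, φ i xi < ⊤ := fun i xi =>
    lt_of_le_of_lt (hφ_bd i xi) (EReal.coe_lt_top _)
  have hχφ : ∀ i xi, χ i xi ≤ φ i xi := by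
    intro i xi
    exact le_limsup_of_frequently_le'
      (Filter.frequently_iff.2 fun hU => ⟨xi, mem_of_mem_nhds hU, le_rfl⟩)
  -- the main inequality, by replacing χ by φ one coordinate at a time
  have hmain : ∀ s : Finset (Fin d), ∀ x : ∀ i, X i,
      ∑ i, (if i ∈ s then φ i (x i) else χ i (x i)) ≤ (c x : EReal) := by
    intro s
    induction s using Finset.induction_on with
    | empty => intro x; simpa using hχle x
    | @insert j s hj ih =>
      intro x
      have hsum_split : ∑ i, (if i ∈ insert j s then φ i (x i) else χ i (x i))
          = φ j (x j) + ∑ i ∈ Finset.univ.erase j,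
              (if i ∈ s then φ i (x i) else χ i (x i)) := by
        rw [← Finset.add_sum_erase _ _ (Finset.mem_univ j), if_pos (Finset.mem_insert_self j s)]
        congr 1
        refine Finset.sum_congr rfl fun i hi => ?_
        have hij : i ≠ j := Finset.ne_of_mem_erase hi
        simp [Finset.mem_insert, hij]
      set R : EReal := ∑ i ∈ Finset.univ.erase j,
        (if i ∈ s then φ i (x i) else χ i (x i)) with hR
      have hkey : ∀ y : X j, χ j y + R ≤ (c (Function.update x j y) : EReal) := by
        intro y
        have h := ih (Function.update x j y)
        rw [← Finset.add_sum_erase _ _ (Finset.mem_univ j), if_neg hj,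
          Function.update_self] at h
        have he : ∑ i ∈ Finset.univ.erase j,
            (if i ∈ s then φ i (Function.update x j y i) else χ i (Function.update x j y i))
            = R := by
          rw [hR]
          refine Finset.sum_congr rfl fun i hi => ?_
          have hij : i ≠ j := Finset.ne_of_mem_erase hi
          rw [Function.update_of_ne hij]
        rwa [he] at h
      rw [hsum_split]
      rcases eq_or_ne R ⊥ with hRbot | hRbot
      · rw [hRbot, EReal.add_bot]; exact bot_le
      · have hRtop : R ≠ ⊤ := by
          rw [hR]
          refine ereal_sum_ne_top _ _ fun i hi => ?_
          split
          · exact (hφtop _ _).ne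
          · exact hχtop _ _
        set r : ℝ := R.toReal with hr
        have hRr : R = ((r : ℝ) : EReal) := (EReal.coe_toReal hRtop hRbot).symm
        have h2 : ∀ y : X j, χ j y ≤ ((c (Function.update x j y) - r : ℝ) : EReal) := by
          intro y
          rcases eq_or_ne (χ j y) ⊥ with hb | hb
          · rw [hb]; exact bot_le
          · have hv : χ j y = (((χ j y).toReal : ℝ) : EReal) :=
              (EReal.coe_toReal (hχtop j y) hb).symm
            have h3 := hkey y
            rw [hv, hRr, ← EReal.coe_add] at h3
            rw [hv]
            have h4 : (χ j y).toReal + r ≤ c (Function.update x j y) :=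
              EReal.coe_le_coe_iff.1 h3
            exact EReal.coe_le_coe_iff.2 (by linarith)
        have h5 : φ j (x j) ≤ ((c x - r : ℝ) : EReal) := by
          have h6 : limsup (χ j) (𝓝 (x j))
              ≤ limsup (fun y => ((c (Function.update x j y) - r : ℝ) : EReal)) (𝓝 (x j)) :=
            limsup_le_limsup (Eventually.of_forall h2)
          have hcont : Continuous fun y : X j =>
              ((c (Function.update x j y) - r : ℝ) : EReal) :=
            continuous_coe_real_ereal.comp
              ((hc.comp (continuous_const.update j continuous_id)).sub continuous_const)
          have h7 := (hcont.tendsto (x j)).limsup_eq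
          rw [h7, Function.update_eq_self] at h6
          exact h6
        rw [hRr]
        calc φ j (x j) + ((r : ℝ) : EReal)
            ≤ ((c x - r : ℝ) : EReal) + ((r : ℝ) : EReal) := add_le_add_left h5 _
          _ = ((c x : ℝ) : EReal) := by rw [← EReal.coe_add]; norm_num
  refine ⟨φ, ⟨hφtop, ?_, ?_⟩, ?_, hφ_bd⟩
  · intro x
    have h := hmain Finset.univ x
    simpa using h
  · intro x hx
    refine le_antisymm (by simpa using hmain Finset.univ x) ?_
    calc (c x : EReal) = ∑ i, χ i (x i) := (hχeq x hx).symm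
      _ ≤ ∑ i, φ i (x i) := Finset.sum_le_sum fun i _ => hχφ i (x i)
  · intro i
    exact measurable_limsup_nhds (χ i)
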